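/- The assignment c(L_n, Y_m) = ((m+μ+1)/2)·δ_{n, −m−μ} (all other basis pairings zero, extended skew-symmetrically and bilinearly) defines a 2-cocycle on L_{−3,μ} for μ ∈ ℤ*. -/

import Mathlib

/-- The free ℂ-module with basis {L_n, Y_n, M_n : n ∈ ℤ};
(n, 0) ↔ L_n, (n, 1) ↔ Y_n, (n, 2) ↔ M_n. -/
abbrev SVModule : Type := (ℤ × Fin 3) →₀ ℂ

/-- basis vector -/
noncomputable def sv (i : ℤ × Fin 3) : SVModule := Finsupp.single i 1

/-- The bracket of L_{λ,μ} on basis vectors. -/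
noncomputable def svBracketAux (lam mu : ℂ) (i j : ℤ × Fin 3) : SVModule :=
  let n : ℤ := i.1
  let m : ℤ := j.1
  if i.2 = 0 ∧ j.2 = 0 then ((m : ℂ) - n) • sv (m + n, 0)
  else if i.2 = 0 ∧ j.2 = 1 then ((m : ℂ) - (lam + 1) * n / 2 + mu) • sv (m + n, 1)
  else if i.2 = 1 ∧ j.2 = 0 then -(((n : ℂ) - (lam + 1) * m / 2 + mu) • sv (m + n, 1))
  else if i.2 = 1 ∧ j.2 = 1 then ((m : ℂ) - n) • sv (m + n, 2)
  else if i.2 = 0 ∧ j.2 = 2 then ((m : ℂ) - lam * n + 2 * mu) • sv (m + n, 2)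
  else if i.2 = 2 ∧ j.2 = 0 then -(((n : ℂ) - lam * m + 2 * mu) • sv (m + n, 2))
  else 0

/-- The bilinear extension of the bracket. -/
noncomputable def svBracket (lam mu : ℂ) :
    SVModule →ₗ[ℂ] SVModule →ₗ[ℂ] SVModule :=
  Finsupp.lsum ℂ fun i => LinearMap.toSpanSingleton ℂ _
    (Finsupp.lsum ℂ fun j => LinearMap.toSpanSingleton ℂ _ (svBracketAux lam mu i j))

/-- Cocycle values: c(L_n, Y_m) = ((m+μ+1)/2)·δ_{n, -m-μ}, extended
skew-symmetrically, all other basis pairings zero. -/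
noncomputable def cVal (mu : ℤ) (i j : ℤ × Fin 3) : ℂ :=
  if i.2 = 0 ∧ j.2 = 1 ∧ i.1 = -j.1 - mu then ((j.1 : ℂ) + mu + 1) / 2
  else if i.2 = 1 ∧ j.2 = 0 ∧ j.1 = -i.1 - mu then -(((i.1 : ℂ) + mu + 1) / 2)
  else 0

/-- The bilinear extension of the cocycle values. -/
noncomputable def cMap (mu : ℤ) : SVModule →ₗ[ℂ] SVModule →ₗ[ℂ] ℂ :=
  Finsupp.lsum ℂ fun i => LinearMap.toSpanSingleton ℂ _
    (Finsupp.lsum ℂ fun j => LinearMap.toSpanSingleton ℂ _ (cVal mu i j))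

lemma cMap_sv (mu : ℤ) (i j : ℤ × Fin 3) : cMap mu (sv i) (sv j) = cVal mu i j := by
  simp [cMap, sv, Finsupp.lsum_single, LinearMap.toSpanSingleton_apply]

lemma svBracket_sv (lam mu : ℂ) (i j : ℤ × Fin 3) :
    svBracket lam mu (sv i) (sv j) = svBracketAux lam mu i j := by
  simp [svBracket, sv, Finsupp.lsum_single, LinearMap.toSpanSingleton_apply]

lemma single_eq_smul_sv (i : ℤ × Fin 3) (a : ℂ) :
    (Finsupp.single i a : SVModule) = a • sv i := by
  simp [sv, Finsupp.smul_single]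

lemma fin3_cases (a : Fin 3) : a = 0 ∨ a = 1 ∨ a = 2 := by
  fin_cases a
  · exact Or.inl rfl
  · exact Or.inr (Or.inl rfl)
  · exact Or.inr (Or.inr rfl)

lemma cVal_skew (mu : ℤ) (i j : ℤ × Fin 3) : cVal mu i j = - cVal mu j i := by
  obtain ⟨n, a⟩ := i
  obtain ⟨m, b⟩ := j
  rcases fin3_cases a with rfl | rfl | rfl <;> rcases fin3_cases b with rfl | rfl | rfl <;>
    norm_num [cVal, Fin.ext_iff] <;>
    (try split_ifs) <;> first
      | ring
      | omega
      | simp_all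

set_option maxHeartbeats 1000000 in
lemma cocycle_sv (mu : ℤ) (i j k : ℤ × Fin 3) :
    cMap mu (svBracket (-3) (mu : ℂ) (sv i) (sv j)) (sv k)
      + cMap mu (svBracket (-3) (mu : ℂ) (sv j) (sv k)) (sv i)
      + cMap mu (svBracket (-3) (mu : ℂ) (sv k) (sv i)) (sv j) = 0 := by
  obtain ⟨n, a⟩ := i
  obtain ⟨m, b⟩ := j
  obtain ⟨p, c⟩ := k
  rcases fin3_cases a with rfl | rfl | rfl <;> rcases fin3_cases b with rfl | rfl | rfl <;>
    rcases fin3_cases c with rfl | rfl | rfl <;>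
    simp only [svBracket_sv] <;>
    norm_num [svBracketAux, cMap_sv, cVal, Fin.ext_iff] <;>
    (try split_ifs) <;> first
      | (exfalso; omega)
      | ((have hp : p = -n - m - mu := by omega); subst hp; push_cast; ring)
      | (push_cast; ring)
      | simp_all

theorem stmt_18 (mu : ℤ) (hmu : mu ≠ 0) :
    (∀ x y : SVModule, cMap mu x y = - cMap mu y x) ∧
    (∀ x y z : SVModule,
      cMap mu (svBracket (-3) (mu : ℂ) x y) z
        + cMap mu (svBracket (-3) (mu : ℂ) y z) x
        + cMap mu (svBracket (-3) (mu : ℂ) z x) y = 0) := by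
  constructor
  · intro x y
    induction x using Finsupp.induction_linear with
    | zero => simp
    | add f g hf hg => simp only [map_add, LinearMap.add_apply, hf, hg]; ring
    | single i a =>
      induction y using Finsupp.induction_linear with
      | zero => simp
      | add f g hf hg => simp only [map_add, LinearMap.add_apply, hf, hg]; ring
      | single j b =>
        rw [single_eq_smul_sv, single_eq_smul_sv]
        simp only [map_smul, LinearMap.smul_apply, smul_eq_mul, cMap_sv]
        rw [cVal_skew]
        ring
  · intro x y z
    induction x using Finsupp.induction_linear with
    | zero => simp
    | add f g hf hg =>
      simp only [map_add, LinearMap.add_apply] at hf hg ⊢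
      linear_combination hf + hg
    | single i a =>
      induction y using Finsupp.induction_linear with
      | zero => simp
      | add f g hf hg =>
        simp only [map_add, LinearMap.add_apply] at hf hg ⊢
        linear_combination hf + hg
      | single j b =>
        induction z using Finsupp.induction_linear with
        | zero => simp
        | add f g hf hg =>
          simp only [map_add, LinearMap.add_apply] at hf hg ⊢
          linear_combination hf + hg
        | single k c =>
          rw [single_eq_smul_sv, single_eq_smul_sv, single_eq_smul_sv]
          simp only [map_smul, LinearMap.smul_apply, smul_eq_mul]
          linear_combination (a * b * c) * cocycle_sv mu i j k
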